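/- arXiv:0901.2428 — 3 statements merged into one kernel-verified Lean document; each statement's English description precedes it below -/
import Mathlib

section
/- Let X be a set and let u, v, g, h be bijections of X. Suppose D ⊆ X is a set such that u and v fix every point outside D (i.e., supp(u) ⊆ D and supp(v) ⊆ D), and the three sets D, g(D), h(D) are pairwise disjoint. Then [u, v] = [[u, g], [v, h]], where [x, y] = x y x⁻¹ y⁻¹. -/
private lemma commute_of_disjoint_supp {X : Type*} {p q : Equiv.Perm X} {A B : Set X}
    (hp : {x : X | p x ≠ x} ⊆ A) (hq : {x : X | q x ≠ x} ⊆ B)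
    (hAB : Disjoint A B) : Commute p q := by
  apply Equiv.Perm.Disjoint.commute
  intro x
  by_contra hx
  push_neg at hx
  exact Set.disjoint_left.1 hAB (hp hx.1) (hq hx.2)

private lemma conj_supp {X : Type*} {p : Equiv.Perm X} {A : Set X}
    (hp : {x : X | p x ≠ x} ⊆ A) (g : Equiv.Perm X) :
    {x : X | (g * p⁻¹ * g⁻¹) x ≠ x} ⊆ g '' A := by
  intro z hz
  simp only [Set.mem_setOf_eq, Equiv.Perm.mul_apply] at hz
  have h1 : p⁻¹ (g⁻¹ z) ≠ g⁻¹ z := by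
    intro h
    apply hz
    rw [h]; simp
  have h2 : p (g⁻¹ z) ≠ g⁻¹ z := fun h => h1 (by rw [Equiv.Perm.inv_eq_iff_eq]; exact h.symm)
  exact ⟨g⁻¹ z, hp h2, by simp⟩

private lemma comm_trick {G : Type*} [Group G] (u v x y : G)
    (cxy : Commute x y) (cxv : Commute x v) (cyu : Commute y u) :
    (u * x) * (v * y) * (u * x)⁻¹ * (v * y)⁻¹ = u * v * u⁻¹ * v⁻¹ := by
  rw [mul_inv_rev, mul_inv_rev]
  simp only [mul_assoc]
  rw [← mul_assoc x v, cxv.eq, mul_assoc, ← mul_assoc x y, cxy.eq, mul_assoc,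
    ← mul_assoc x, mul_inv_cancel, one_mul, ← mul_assoc y u⁻¹, cyu.inv_right.eq,
    mul_assoc, ← mul_assoc y, mul_inv_cancel, one_mul]

theorem stmt4 {X : Type*} (u v g h : Equiv.Perm X) (D : Set X)
    (hu : {x : X | u x ≠ x} ⊆ D) (hv : {x : X | v x ≠ x} ⊆ D)
    (hDg : Disjoint D (g '' D)) (hDh : Disjoint D (h '' D))
    (hgh : Disjoint (g '' D) (h '' D)) :
    u * v * u⁻¹ * v⁻¹ =
      ((u * g * u⁻¹ * g⁻¹) * (v * h * v⁻¹ * h⁻¹) *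
        (u * g * u⁻¹ * g⁻¹)⁻¹ * (v * h * v⁻¹ * h⁻¹)⁻¹) := by
  set x := g * u⁻¹ * g⁻¹ with hxdef
  set y := h * v⁻¹ * h⁻¹ with hydef
  have hxsupp : {z : X | x z ≠ z} ⊆ g '' D := conj_supp hu g
  have hysupp : {z : X | y z ≠ z} ⊆ h '' D := conj_supp hv h
  have cxy : Commute x y := commute_of_disjoint_supp hxsupp hysupp hgh
  have cxv : Commute x v := commute_of_disjoint_supp hxsupp hv hDg.symm
  have cyu : Commute y u := commute_of_disjoint_supp hysupp hu hDh.symm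
  have ha : u * g * u⁻¹ * g⁻¹ = u * x := by rw [hxdef]; group
  have hb : v * h * v⁻¹ * h⁻¹ = v * y := by rw [hydef]; group
  rw [ha, hb, comm_trick u v x y cxy cxv cyu]
end

section
/- Let X be a set, G a group of permutations of X, and N a normal subgroup of G containing some element g. Suppose there exist h ∈ G and a subset D ⊆ X such that D, g(D), h(D) are pairwise disjoint. Then for every pair u, v ∈ G with supp(u) ⊆ D and supp(v) ⊆ D, the commutator [u, v] belongs to N. -/
theorem stmt5 {X : Type*} (G : Subgroup (Equiv.Perm X)) (N : Subgroup G)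
    (hN : N.Normal) (g : G) (hg : g ∈ N) (h : G) (D : Set X)
    (hDg : Disjoint D ((g : Equiv.Perm X) '' D))
    (hDh : Disjoint D ((h : Equiv.Perm X) '' D))
    (hgh : Disjoint ((g : Equiv.Perm X) '' D) ((h : Equiv.Perm X) '' D)) :
    ∀ u v : G, {x : X | (u : Equiv.Perm X) x ≠ x} ⊆ D →
      {x : X | (v : Equiv.Perm X) x ≠ x} ⊆ D →
      u * v * u⁻¹ * v⁻¹ ∈ N := by
  intro u v hu hv
  -- general commuting lemma from disjoint supports
  have key : ∀ (a b : G) (A B : Set X), Disjoint A B →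
      {x : X | (a : Equiv.Perm X) x ≠ x} ⊆ A →
      {x : X | (b : Equiv.Perm X) x ≠ x} ⊆ B → Commute a b := by
    intro a b A B hAB ha hb
    have hd : (a : Equiv.Perm X).Disjoint (b : Equiv.Perm X) := by
      intro x
      by_cases hx : (a : Equiv.Perm X) x = x
      · exact Or.inl hx
      · have hxA : x ∈ A := ha hx
        have hxB : x ∉ B := fun hxB => (hAB.le_bot ⟨hxA, hxB⟩)
        exact Or.inr (by_contra fun hbx => hxB (hb hbx))
    exact Subtype.ext hd.commute
  set u' : G := g * u⁻¹ * g⁻¹ with hu'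
  set v' : G := h * v⁻¹ * h⁻¹ with hv'
  -- support bounds for conjugates
  have conj_supp : ∀ (w k : G), {x : X | (w : Equiv.Perm X) x ≠ x} ⊆ D →
      {x : X | ((k * w⁻¹ * k⁻¹ : G) : Equiv.Perm X) x ≠ x} ⊆ (k : Equiv.Perm X) '' D := by
    intro w k hw x hx
    have hx' : (w : Equiv.Perm X) ((k : Equiv.Perm X)⁻¹ x) ≠ (k : Equiv.Perm X)⁻¹ x := by
      intro hfix
      apply hx
      have : ((k * w⁻¹ * k⁻¹ : G) : Equiv.Perm X) x
          = (k : Equiv.Perm X) ((w : Equiv.Perm X)⁻¹ ((k : Equiv.Perm X)⁻¹ x)) := rfl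
      rw [this]
      have : (w : Equiv.Perm X)⁻¹ ((k : Equiv.Perm X)⁻¹ x) = (k : Equiv.Perm X)⁻¹ x := by
        conv_lhs => rw [← hfix]
        simp
      rw [this]; simp
    exact ⟨(k : Equiv.Perm X)⁻¹ x, hw hx', by simp⟩
  have hsu' : {x : X | ((u' : G) : Equiv.Perm X) x ≠ x} ⊆ (g : Equiv.Perm X) '' D :=
    conj_supp u g hu
  have hsv' : {x : X | ((v' : G) : Equiv.Perm X) x ≠ x} ⊆ (h : Equiv.Perm X) '' D :=
    conj_supp v h hv
  have c1 : Commute u' v := (key v u' D _ hDg hv hsu').symm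
  have c2 : Commute u' v' := key u' v' _ _ hgh hsu' hsv'
  have c3 : Commute v' u := (key u v' D _ hDh hu hsv').symm
  -- membership of the double commutator
  have ha : u * u' ∈ N := by
    have h1 : u * g * u⁻¹ ∈ N := hN.conj_mem g hg u
    have : u * u' = (u * g * u⁻¹) * g⁻¹ := by rw [hu']; group
    rw [this]
    exact N.mul_mem h1 (N.inv_mem hg)
  have hmem : (u * u') * (v * v') * (u * u')⁻¹ * (v * v')⁻¹ ∈ N := by
    have h2 : (v * v') * (u * u')⁻¹ * (v * v')⁻¹ ∈ N := hN.conj_mem _ (N.inv_mem ha) _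
    have : (u * u') * (v * v') * (u * u')⁻¹ * (v * v')⁻¹
        = (u * u') * ((v * v') * (u * u')⁻¹ * (v * v')⁻¹) := by group
    rw [this]
    exact N.mul_mem ha h2
  -- Thurston identity
  have hid : (u * u') * (v * v') * (u * u')⁻¹ * (v * v')⁻¹ = u * v * u⁻¹ * v⁻¹ := by
    have e1 : u' * v = v * u' := c1
    have e2 : u' * v' = v' * u' := c2
    have e3 : v' * u⁻¹ = u⁻¹ * v' := c3.inv_right
    calc (u * u') * (v * v') * (u * u')⁻¹ * (v * v')⁻¹
        = u * (u' * v) * v' * u'⁻¹ * u⁻¹ * v'⁻¹ * v⁻¹ := by group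
      _ = u * (v * u') * v' * u'⁻¹ * u⁻¹ * v'⁻¹ * v⁻¹ := by rw [e1]
      _ = u * v * (u' * v') * u'⁻¹ * u⁻¹ * v'⁻¹ * v⁻¹ := by group
      _ = u * v * (v' * u') * u'⁻¹ * u⁻¹ * v'⁻¹ * v⁻¹ := by rw [e2]
      _ = u * v * ((v' * u⁻¹) * v'⁻¹) * v⁻¹ := by group
      _ = u * v * ((u⁻¹ * v') * v'⁻¹) * v⁻¹ := by rw [e3]
      _ = u * v * u⁻¹ * v⁻¹ := by group
  rw [← hid]
  exact hmem
end

section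
/- Let G be a group, ν : G → ℕ a conjugation-invariant, symmetric, subadditive norm, and let (g_i)_{i≥1} be a sequence of pairwise commuting elements of G whose product stabilizes in the following weak sense: for each i there is an element r_i ∈ G (the 'tail') with ν(r_i) ≤ 1 such that g = g_1 g_2 ⋯ g_i · r_i. If for each i one has ν(g_i) ≥ c_i + ν(g_{i-1} ⋯ g_1) + 1 for some real c_i ≥ 0, then ν(g) ≥ c_i for every i. -/
theorem stmt17 {G : Type*} [Group G] (ν : G → ℕ)
    (hconj : ∀ g h : G, ν (h * g * h⁻¹) = ν g)
    (hsymm : ∀ g : G, ν g⁻¹ = ν g)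
    (hsub : ∀ g h : G, ν (g * h) ≤ ν g + ν h)
    (g : G) (gseq : ℕ → G) (r : ℕ → G) (c : ℕ → ℝ)
    (hcomm : ∀ i j : ℕ, i ≠ j → Commute (gseq i) (gseq j))
    (hc : ∀ i, 0 ≤ c i)
    (htail : ∀ i : ℕ, g = ((List.range (i + 1)).map gseq).prod * r i ∧ ν (r i) ≤ 1)
    (hgrow : ∀ i : ℕ,
      (ν (gseq i) : ℝ) ≥ c i + (ν (((List.range i).map gseq).prod) : ℝ) + 1) :
    ∀ i : ℕ, (ν g : ℝ) ≥ c i := by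
  intro i
  obtain ⟨hg, hr⟩ := htail i
  have hP : ((List.range (i+1)).map gseq).prod = ((List.range i).map gseq).prod * gseq i := by
    rw [List.range_succ, List.map_append, List.prod_append, List.map_singleton,
      List.prod_singleton]
  rw [hP] at hg
  set P := ((List.range i).map gseq).prod with hPdef
  have heq : gseq i = P⁻¹ * g * (r i)⁻¹ := by rw [hg]; group
  have h1 : ν (gseq i) ≤ ν P + ν g + 1 := by
    calc ν (gseq i) = ν (P⁻¹ * g * (r i)⁻¹) := by rw [heq]
    _ ≤ ν (P⁻¹ * g) + ν (r i)⁻¹ := hsub _ _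
    _ ≤ (ν P⁻¹ + ν g) + ν (r i)⁻¹ := by
        exact Nat.add_le_add_right (hsub _ _) _
    _ ≤ ν P + ν g + 1 := by rw [hsymm, hsymm]; omega
  have h2 : (ν (gseq i) : ℝ) ≤ (ν P : ℝ) + ν g + 1 := by exact_mod_cast h1
  have h3 := hgrow i
  linarith
end
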